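/- arXiv:1412.6958 — 3 statements merged into one kernel-verified Lean document; each statement's English description precedes it below -/
import Mathlib

section
/- Let x_1, x_2, x_3 ∈ ℝ² form a nondegenerate triangle (i.e., x_2 − x_1 and x_3 − x_1 are linearly independent). Then there exists an open neighborhood U of (x_1, x_2) in ℝ⁴ and a unique smooth map ξ: U → ℝ² such that ξ(x_1, x_2) = x_3 and, for every (x'_1, x'_2) ∈ U, ‖ξ(x'_1,x'_2) − x'_1‖ = ‖x_3 − x_1‖ and ‖ξ(x'_1,x'_2) − x'_2‖ = ‖x_3 − x_2‖. -/
open scoped BigOperators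

noncomputable section

/-- Points in the Euclidean plane. -/
abbrev Pt : Type := EuclideanSpace ℝ (Fin 2)

/-- The flattened space of planar configurations indexed by `ι`
(two real coordinates for each vertex). -/
abbrev Conf (ι : Type*) : Type _ := EuclideanSpace ℝ (ι × Fin 2)

/-- The position of agent `i` in the configuration `p`. -/
def pt {ι : Type*} (p : Conf ι) (i : ι) : Pt := WithLp.toLp 2 (fun c => p (i, c))

/-- The sub-configuration of `p` on the vertices in `S`. -/
def restr {ι : Type*} (S : Set ι) (p : Conf ι) : Conf ↥S := WithLp.toLp 2 (fun ic => p ((ic.1 : ι), ic.2))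

/-- The configuration space `P_G`: embeddings of the vertex set in the plane for which
adjacent vertices have distinct positions. -/
def configSpace {ι : Type*} (G : SimpleGraph ι) : Set (Conf ι) :=
  {p | ∀ i j : ι, G.Adj i j → pt p i ≠ pt p j}

/-- A Henneberg sequence for a triangulated Laman graph `G`, encoded by the order
`ord` in which the vertices appear, and for every step `l ≥ 2` the two earlier steps
`par1 l`, `par2 l`, whose (adjacent) vertices the new vertex `ord l` is joined to.
The edges of `G` are exactly the initial edge together with the edges created at
each step. -/
structure Henneberg {ι : Type*} (G : SimpleGraph ι) : Type _ where
  two_le : 2 ≤ Nat.card ι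
  ord : Fin (Nat.card ι) ≃ ι
  par1 : Fin (Nat.card ι) → Fin (Nat.card ι)
  par2 : Fin (Nat.card ι) → Fin (Nat.card ι)
  par1_lt : ∀ l : Fin (Nat.card ι), 2 ≤ (l : ℕ) → par1 l < l
  par2_lt : ∀ l : Fin (Nat.card ι), 2 ≤ (l : ℕ) → par2 l < l
  par_ne : ∀ l : Fin (Nat.card ι), 2 ≤ (l : ℕ) → par1 l ≠ par2 l
  par_adj : ∀ l : Fin (Nat.card ι), 2 ≤ (l : ℕ) → G.Adj (ord (par1 l)) (ord (par2 l))
  edge_iff : ∀ i j : ι, G.Adj i j ↔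
    (s(i, j) = s(ord ⟨0, by omega⟩, ord ⟨1, by omega⟩) ∨
      ∃ l : Fin (Nat.card ι), 2 ≤ (l : ℕ) ∧
        (s(i, j) = s(ord (par1 l), ord l) ∨ s(i, j) = s(ord (par2 l), ord l)))

/-- A graph is a triangulated Laman graph if it is (essentially) a single vertex, or
it can be built by a Henneberg sequence in which each new vertex is joined to the two
endpoints of an existing edge. -/
def IsTriangulatedLaman {ι : Type*} (G : SimpleGraph ι) : Prop :=
  Nat.card ι ≤ 1 ∨ Nonempty (Henneberg G)

open Classical in
/-- The potential `Φ` induced by `G`, with control laws `f i j = u_{ij}(⬝, d̄_{ij})`: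
`Φ(p) = Σ_{(i,j) ∈ E} ∫_1^{‖x_i - x_j‖} s u_{ij}(s, d̄_{ij}) ds`
(each edge is counted once; the double sum counts it twice, whence the factor 1/2). -/
def potential {ι : Type*} [Fintype ι] (G : SimpleGraph ι) (f : ι → ι → ℝ → ℝ)
    (p : Conf ι) : ℝ :=
  (1 / 2) * ∑ i : ι, ∑ j : ι,
    if G.Adj i j then ∫ s in (1 : ℝ)..(dist (pt p i) (pt p j)), s * f i j s else 0

open Classical in
/-- The right-hand side of the formation control system
`ẋ_i = Σ_{j ∈ N_i} u_{ij}(‖x_i - x_j‖, d̄_{ij}) (x_j - x_i)`. -/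
def formationField {ι : Type*} [Fintype ι] (G : SimpleGraph ι) (f : ι → ι → ℝ → ℝ)
    (p : Conf ι) : Conf ι :=
  WithLp.toLp 2 (fun ic => ∑ j : ι,
    if G.Adj ic.1 j then f ic.1 j (dist (pt p ic.1) (pt p j)) * (p (j, ic.2) - p (ic.1, ic.2))
    else 0)

/-- A monotone attraction/repulsion function: `f` is C¹ on `ℝ_{>0}`,
`d(x f(x))/dx > 0` for `x > 0`, `f` has a unique (positive) zero, and
`∫_x^1 s f(s) ds → -∞` as `x → 0⁺`. -/
structure IsMonoAttRep (f : ℝ → ℝ) : Prop where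
  contDiff : ContDiffOn ℝ 1 f (Set.Ioi 0)
  deriv_pos : ∀ x : ℝ, 0 < x → 0 < deriv (fun y => y * f y) x
  unique_zero : ∃! x : ℝ, 0 < x ∧ f x = 0
  collision : Filter.Tendsto (fun x : ℝ => ∫ s in x..(1 : ℝ), s * f s)
    (nhdsWithin 0 (Set.Ioi 0)) Filter.atBot

/-- 2×2 rotation matrices. -/
def IsRotation (θ : Matrix (Fin 2) (Fin 2) ℝ) : Prop := θ * θ.transpose = 1 ∧ θ.det = 1

/-- The action of `γ = (θ, v) ∈ SE(2)` on configurations: `γ·p = (θ x_1 + v, …, θ x_n + v)`. -/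
def se2Act {ι : Type*} (θ : Matrix (Fin 2) (Fin 2) ℝ) (v : Pt) (p : Conf ι) : Conf ι :=
  WithLp.toLp 2 (fun ic => θ.mulVec (pt p ic.1).ofLp ic.2 + v ic.2)

/-- The SE(2)-orbit `O_p` of a configuration `p`. -/
def se2Orbit {ι : Type*} (p : Conf ι) : Set (Conf ι) :=
  {q | ∃ θ v, IsRotation θ ∧ q = se2Act θ v p}

/-- Rotation by 90 degrees. -/
def rotJ : Matrix (Fin 2) (Fin 2) ℝ := !![0, -1; 1, 0]

/-- The infinitesimal rotation of a configuration. -/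
def infRot {ι : Type*} (p : Conf ι) : Conf ι := WithLp.toLp 2 (fun ic => rotJ.mulVec (pt p ic.1).ofLp ic.2)

/-- The infinitesimal translation in coordinate direction `c`. -/
def transl (ι : Type*) (c : Fin 2) : Conf ι := WithLp.toLp 2 (fun ic => if ic.2 = c then 1 else 0)

/-- The tangent space at `p` of the SE(2)-orbit `O_p`. -/
def orbitTangent {ι : Type*} (p : Conf ι) : Submodule ℝ (Conf ι) :=
  Submodule.span ℝ {infRot p, transl ι 0, transl ι 1}

/-- The Hessian matrix `H_p = ∂²Φ(p)/∂p²`. -/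
def hessianMat {ι : Type*} [Fintype ι] [DecidableEq ι] (Φ : Conf ι → ℝ) (p : Conf ι) :
    Matrix (ι × Fin 2) (ι × Fin 2) ℝ :=
  Matrix.of fun a b =>
    iteratedFDeriv ℝ 2 Φ p ![EuclideanSpace.single a 1, EuclideanSpace.single b 1]

/-- The Hessian of `Φ` at `p` with respect to the coordinates of the vertices in `S`
(for `Φ` depending only on those coordinates this is the Hessian of the induced
function of the positions of the vertices in `S`). -/
def hessianMatOn {ι : Type*} [Fintype ι] [DecidableEq ι] (Φ : Conf ι → ℝ) (p : Conf ι) (S : Set ι) :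
    Matrix (↥S × Fin 2) (↥S × Fin 2) ℝ :=
  Matrix.of fun a b => hessianMat Φ p ((a.1 : ι), a.2) ((b.1 : ι), b.2)

open Classical in
/-- `N₊(A)`: the number of positive eigenvalues of a real symmetric matrix,
counted with multiplicity. -/
def nPos {m : Type*} [Finite m] (A : Matrix m m ℝ) : ℕ :=
  letI := Fintype.ofFinite m
  letI := Classical.decEq m
  if h : A.IsHermitian then Fintype.card {i // 0 < h.eigenvalues i} else 0

open Classical in
/-- `N₋(A)`: the number of negative eigenvalues of a real symmetric matrix,
counted with multiplicity. -/
def nNeg {m : Type*} [Finite m] (A : Matrix m m ℝ) : ℕ :=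
  letI := Fintype.ofFinite m
  letI := Classical.decEq m
  if h : A.IsHermitian then Fintype.card {i // h.eigenvalues i < 0} else 0

open Classical in
/-- `N₀(A)`: the number of zero eigenvalues of a real symmetric matrix,
counted with multiplicity. -/
def nZero {m : Type*} [Finite m] (A : Matrix m m ℝ) : ℕ :=
  letI := Fintype.ofFinite m
  letI := Classical.decEq m
  if h : A.IsHermitian then Fintype.card {i // h.eigenvalues i = 0} else 0

/-- `Φ` is an equivariant Morse function on `P_G`: it has finitely many critical orbits,
and each critical orbit is nondegenerate (the Hessian has exactly three zero eigenvalues). -/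
def IsEquivariantMorse {ι : Type*} [Fintype ι] [DecidableEq ι] (G : SimpleGraph ι)
    (Φ : Conf ι → ℝ) : Prop :=
  {O : Set (Conf ι) | ∃ p ∈ configSpace G, gradient Φ p = 0 ∧ O = se2Orbit p}.Finite ∧
  ∀ p ∈ configSpace G, gradient Φ p = 0 → nZero (hessianMat Φ p) = 3

/-- `i`, `j`, `k` form a 3-cycle of `G`. -/
def Is3Cycle {ι : Type*} (G : SimpleGraph ι) (i j k : ι) : Prop :=
  G.Adj i j ∧ G.Adj i k ∧ G.Adj j k

/-- A framework `(G, p)` is strongly rigid if every 3-cycle of `G` is embedded by `p`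
as a nondegenerate triangle. -/
def StronglyRigid {ι : Type*} (G : SimpleGraph ι) (p : Conf ι) : Prop :=
  ∀ i j k : ι, Is3Cycle G i j k →
    LinearIndependent ℝ ![pt p j - pt p i, pt p k - pt p i]

/-- The target distances satisfy the strict triangle inequalities associated with `G`. -/
def StrictTriangleIneqs {ι : Type*} (G : SimpleGraph ι) (dbar : ι → ι → ℝ) : Prop :=
  ∀ i j k : ι, Is3Cycle G i j k →
    dbar j k < dbar i j + dbar i k ∧ dbar i k < dbar i j + dbar j k ∧
      dbar i j < dbar i k + dbar j k

/-- A triangulated formation system: a formation control system induced by a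
triangulated Laman graph, with target distances satisfying the strict triangle
inequalities, monotone attraction/repulsion control laws vanishing at the target
distances, and whose potential is an equivariant Morse function. -/
structure IsTriFormation {ι : Type*} [Fintype ι] [DecidableEq ι] (G : SimpleGraph ι)
    (f : ι → ι → ℝ → ℝ) (dbar : ι → ι → ℝ) : Prop where
  laman : IsTriangulatedLaman G
  fsymm : ∀ i j, f i j = f j i
  dsymm : ∀ i j, dbar i j = dbar j i
  dpos : ∀ i j, G.Adj i j → 0 < dbar i j
  mono : ∀ i j, G.Adj i j → IsMonoAttRep (f i j)
  fzero : ∀ i j, G.Adj i j → f i j (dbar i j) = 0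
  triangle : StrictTriangleIneqs G dbar
  morse : IsEquivariantMorse G (potential G f)

/-- The (critical) orbit of `p` is exponentially stable: the Hessian of `Φ` at `p` has
exactly three zero eigenvalues and no negative eigenvalues (all the others positive). -/
def ExpStableAt {ι : Type*} [Fintype ι] [DecidableEq ι] (Φ : Conf ι → ℝ) (p : Conf ι) : Prop :=
  nZero (hessianMat Φ p) = 3 ∧ nNeg (hessianMat Φ p) = 0

/-- Generating relation for the independent partition: at each step `l ≥ 2` of the
Henneberg sequence in which the new vertex is aligned with its two parents, the two
new edges are related to the parent edge. -/
def triGen {ι : Type*} {G : SimpleGraph ι} (H : Henneberg G) (p : Conf ι) :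
    Sym2 ι → Sym2 ι → Prop := fun e e' =>
  ∃ l : Fin (Nat.card ι), 2 ≤ (l : ℕ) ∧
    Collinear ℝ {pt p (H.ord (H.par1 l)), pt p (H.ord (H.par2 l)), pt p (H.ord l)} ∧
    e' = s(H.ord (H.par1 l), H.ord (H.par2 l)) ∧
    (e = s(H.ord (H.par1 l), H.ord l) ∨ e = s(H.ord (H.par2 l), H.ord l))

/-- The independent partition of the edge set of `G` for the framework `(G, p)`,
computed along the Henneberg sequence `H`. -/
def indepPartition {ι : Type*} {G : SimpleGraph ι} (H : Henneberg G) (p : Conf ι) :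
    Set (Set (Sym2 ι)) :=
  {C | ∃ e ∈ G.edgeSet, C = {e' | e' ∈ G.edgeSet ∧ Relation.EqvGen (triGen H p) e e'}}

/-- The set `V_i` of vertices incident to the edges in a class `C`. -/
def classVerts {ι : Type*} (C : Set (Sym2 ι)) : Set ι := {v | ∃ e ∈ C, v ∈ e}

end

open scoped RealInnerProductSpace

noncomputable def JL : Pt →L[ℝ] Pt :=
  LinearMap.toContinuousLinearMap
  { toFun := fun w => WithLp.toLp 2 ![-(w 1), w 0]
    map_add' := by intro a b; ext i; fin_cases i <;> (simp; try ring)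
    map_smul' := by intro c a; ext i; fin_cases i <;> (simp; try ring) }

lemma key1 (u v : Pt) : ⟪v, u⟫ • u + ⟪v, JL u⟫ • JL u = ⟪u, u⟫ • v := by
  ext i
  have h0 : ∀ (w : Pt) (j : Fin 2), JL w j = ![-(w 1), w 0] j := fun _ _ => rfl
  fin_cases i <;>
    (simp only [PiLp.inner_apply]; simp [PiLp.inner_apply, Fin.sum_univ_two, h0, PiLp.add_apply, PiLp.smul_apply,
      smul_eq_mul]; ring)

lemma key2 (u v : Pt) : ⟪v, u⟫ ^ 2 + ⟪v, JL u⟫ ^ 2 = ⟪u, u⟫ * ⟪v, v⟫ := by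
  have h0 : ∀ (w : Pt) (j : Fin 2), JL w j = ![-(w 1), w 0] j := fun _ _ => rfl
  simp only [PiLp.inner_apply]; simp [PiLp.inner_apply, Fin.sum_univ_two, h0]; ring

lemma key3 (u : Pt) : ⟪u, JL u⟫ = 0 := by
  have h0 : ∀ (w : Pt) (j : Fin 2), JL w j = ![-(w 1), w 0] j := fun _ _ => rfl
  simp [PiLp.inner_apply, Fin.sum_univ_two, h0]; ring

lemma key3' (u : Pt) : ⟪JL u, u⟫ = 0 := by rw [real_inner_comm]; exact key3 u

lemma key4 (u : Pt) : ⟪JL u, JL u⟫ = ⟪u, u⟫ := by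
  have h0 : ∀ (w : Pt) (j : Fin 2), JL w j = ![-(w 1), w 0] j := fun _ _ => rfl
  simp only [PiLp.inner_apply]; simp [PiLp.inner_apply, Fin.sum_univ_two, h0]; ring

lemma scalar1 {d a e r1 α β : ℝ} (hd : d ≠ 0) (hα : α = a / d)
    (hβ : β ^ 2 = e / d ^ 2) (he : e = r1 ^ 2 * d - a ^ 2) :
    α ^ 2 * d + β ^ 2 * d = r1 ^ 2 := by
  subst hα he; rw [hβ]; field_simp; ring

lemma scalar2 {d a e r1 r2 α β : ℝ} (hd : d ≠ 0) (hα : α = a / d)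
    (hβ : β ^ 2 = e / d ^ 2) (he : e = r1 ^ 2 * d - a ^ 2)
    (ha : a = (d + r1 ^ 2 - r2 ^ 2) / 2) :
    (α - 1) ^ 2 * d + β ^ 2 * d = r2 ^ 2 := by
  subst hα he ha; rw [hβ]; field_simp; ring

lemma eq_of_sq_eq_sq {a b : ℝ} (ha : 0 ≤ a) (hb : 0 ≤ b) (hab : a ^ 2 = b ^ 2) : a = b := by
  rw [← Real.sqrt_sq ha, hab, Real.sqrt_sq hb]

/-- Lemma 3.6 of the paper. If `x₁, x₂, x₃ ∈ ℝ²` form a nondegenerate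
triangle, then there is an open neighborhood `U` of `(x₁, x₂)` in `ℝ⁴` and a unique smooth
map `ξ : U → ℝ²` with `ξ(x₁, x₂) = x₃` and `‖ξ(x₁', x₂') - x₁'‖ = ‖x₃ - x₁‖`,
`‖ξ(x₁', x₂') - x₂'‖ = ‖x₃ - x₂‖` for all `(x₁', x₂') ∈ U`. -/
theorem stmt10 (x1 x2 x3 : Pt)
    (h : LinearIndependent ℝ ![x2 - x1, x3 - x1]) :
    ∃ U : Set (Pt × Pt), IsOpen U ∧ (x1, x2) ∈ U ∧
      ∃ ξ : Pt × Pt → Pt,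
        (ContDiffOn ℝ (⊤ : ℕ∞) ξ U ∧ ξ (x1, x2) = x3 ∧
          ∀ y ∈ U, dist (ξ y) y.1 = dist x3 x1 ∧ dist (ξ y) y.2 = dist x3 x2) ∧
        ∀ ξ' : Pt × Pt → Pt,
          (ContDiffOn ℝ (⊤ : ℕ∞) ξ' U ∧ ξ' (x1, x2) = x3 ∧
            ∀ y ∈ U, dist (ξ' y) y.1 = dist x3 x1 ∧ dist (ξ' y) y.2 = dist x3 x2) →
          Set.EqOn ξ ξ' U := by
  classical
  set r1 : ℝ := dist x3 x1 with hr1def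
  set r2 : ℝ := dist x3 x2 with hr2def
  set u0 : Pt := x2 - x1 with hu0def
  set v0 : Pt := x3 - x1 with hv0def
  have hr1sq : r1 ^ 2 = ⟪v0, v0⟫ := by
    rw [real_inner_self_eq_norm_sq, hr1def, dist_eq_norm, hv0def]
  have hx32 : x3 - x2 = v0 - u0 := by rw [hv0def, hu0def]; abel
  have hr2sq : r2 ^ 2 = ⟪v0 - u0, v0 - u0⟫ := by
    rw [real_inner_self_eq_norm_sq, ← hx32, hr2def, dist_eq_norm]
  have hu0 : u0 ≠ 0 := by simpa [hu0def] using h.ne_zero 0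
  have hD0 : (0:ℝ) < ⟪u0, u0⟫ := by rw [real_inner_self_eq_norm_sq]; exact pow_pos (norm_pos_iff.mpr hu0) 2
  set A0 : ℝ := ⟪v0, u0⟫ with hA0def
  set c0 : ℝ := ⟪v0, JL u0⟫ with hc0def
  have hc0 : c0 ≠ 0 := by
    intro hc
    rw [LinearIndependent.pair_iff] at h
    have hk := key1 u0 v0
    rw [← hc0def, ← hA0def, hc] at hk
    have hrel : A0 • u0 + (-⟪u0, u0⟫) • v0 = 0 := by
      rw [neg_smul, ← hk]; simp
    exact hD0.ne' (neg_eq_zero.mp (h A0 (-⟪u0, u0⟫) hrel).2)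
  -- the main data
  set Df : Pt × Pt → ℝ := fun y => ⟪y.2 - y.1, y.2 - y.1⟫ with hDfdef
  set Af : Pt × Pt → ℝ := fun y => (Df y + r1 ^ 2 - r2 ^ 2) / 2 with hAfdef
  set Ef : Pt × Pt → ℝ := fun y => r1 ^ 2 * Df y - Af y ^ 2 with hEfdef
  set sg : ℝ := if 0 ≤ c0 then 1 else -1 with hsgdef
  have hsg2 : sg ^ 2 = 1 := by rw [hsgdef]; split <;> norm_num
  set ξ : Pt × Pt → Pt := fun y =>
    y.1 + (Af y / Df y) • (y.2 - y.1) + (sg * Real.sqrt (Ef y) / Df y) • JL (y.2 - y.1)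
    with hξdef
  -- base point values
  have hDb : Df (x1, x2) = ⟪u0, u0⟫ := rfl
  have hAb : Af (x1, x2) = A0 := by
    have hexp : ⟪v0 - u0, v0 - u0⟫ = ⟪v0, v0⟫ - 2 * ⟪v0, u0⟫ + ⟪u0, u0⟫ :=
      real_inner_sub_sub_self v0 u0
    rw [hAfdef]
    simp only [hDb]
    rw [hr1sq, hr2sq, hexp, hA0def]
    ring
  have hEb : Ef (x1, x2) = c0 ^ 2 := by
    have hk2 := key2 u0 v0
    rw [hEfdef]
    simp only [hAb, hDb]
    rw [hr1sq, ← hA0def, ← hc0def] at *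
    linarith
  have hEbpos : 0 < Ef (x1, x2) := by rw [hEb]; exact pow_two_pos_of_ne_zero hc0
  -- continuity of the data
  have hDsm : ContDiff ℝ (⊤ : ℕ∞) Df :=
    (contDiff_snd.sub contDiff_fst).inner ℝ (contDiff_snd.sub contDiff_fst)
  have hAsm : ContDiff ℝ (⊤ : ℕ∞) Af := by
    rw [hAfdef]; exact ((hDsm.add contDiff_const).sub contDiff_const).div_const 2
  have hEsm : ContDiff ℝ (⊤ : ℕ∞) Ef := by
    rw [hEfdef]; exact (contDiff_const.mul hDsm).sub (hAsm.pow 2)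
  -- the neighborhood
  have hVopen : IsOpen {y : Pt × Pt | 0 < Df y ∧ 0 < Ef y} :=
    (isOpen_lt continuous_const hDsm.continuous).inter
      (isOpen_lt continuous_const hEsm.continuous)
  have hbaseV : (x1, x2) ∈ {y : Pt × Pt | 0 < Df y ∧ 0 < Ef y} := ⟨hDb ▸ hD0, hEbpos⟩
  obtain ⟨ε, hε, hball⟩ := Metric.isOpen_iff.mp hVopen _ hbaseV
  set U : Set (Pt × Pt) := Metric.ball (x1, x2) ε with hUdef
  have hDU : ∀ y ∈ U, 0 < Df y := fun y hy => (hball hy).1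
  have hEU : ∀ y ∈ U, 0 < Ef y := fun y hy => (hball hy).2
  have hsgE : sg * Real.sqrt (Ef (x1, x2)) = c0 := by
    rw [hEb, Real.sqrt_sq_eq_abs, hsgdef]
    rcases le_or_gt 0 c0 with hc | hc
    · rw [if_pos hc, one_mul, abs_of_nonneg hc]
    · rw [if_neg (not_le.mpr hc), abs_of_neg hc]; ring
  refine ⟨U, Metric.isOpen_ball, Metric.mem_ball_self hε, ξ, ⟨?_, ?_, ?_⟩, ?_⟩
  · -- smoothness
    have hDne : ∀ y ∈ U, Df y ≠ 0 := fun y hy => (hDU y hy).ne'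
    have h1 : ContDiffOn ℝ (⊤:ℕ∞) (fun y : Pt × Pt => Af y / Df y) U :=
      hAsm.contDiffOn.div hDsm.contDiffOn hDne
    have hsq : ContDiffOn ℝ (⊤:ℕ∞) (fun y => Real.sqrt (Ef y)) U :=
      hEsm.contDiffOn.sqrt (fun y hy => (hEU y hy).ne')
    have h2 : ContDiffOn ℝ (⊤:ℕ∞) (fun y : Pt × Pt => sg * Real.sqrt (Ef y) / Df y) U :=
      (contDiffOn_const.mul hsq).div hDsm.contDiffOn hDne
    have hsub : ContDiff ℝ (⊤:ℕ∞) (fun y : Pt × Pt => y.2 - y.1) :=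
      contDiff_snd.sub contDiff_fst
    have hJ : ContDiff ℝ (⊤:ℕ∞) (fun y : Pt × Pt => JL (y.2 - y.1)) := JL.contDiff.comp hsub
    rw [hξdef]
    exact (contDiff_fst.contDiffOn.add (h1.smul hsub.contDiffOn)).add
      (h2.smul hJ.contDiffOn)
  · -- base value
    have hv0eq : (A0 / ⟪u0, u0⟫) • u0 + (c0 / ⟪u0, u0⟫) • JL u0 = v0 := by
      have e1 : ⟪u0, u0⟫ * (A0 / ⟪u0, u0⟫) = A0 := by
        rw [mul_comm]; exact div_mul_cancel₀ _ hD0.ne'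
      have e2 : ⟪u0, u0⟫ * (c0 / ⟪u0, u0⟫) = c0 := by
        rw [mul_comm]; exact div_mul_cancel₀ _ hD0.ne'
      apply smul_right_injective Pt hD0.ne'
      show ⟪u0, u0⟫ • ((A0 / ⟪u0, u0⟫) • u0 + (c0 / ⟪u0, u0⟫) • JL u0) = ⟪u0, u0⟫ • v0
      rw [smul_add, smul_smul, smul_smul, e1, e2]
      exact key1 u0 v0
    show x1 + (Af (x1, x2) / Df (x1, x2)) • ((x1, x2).2 - (x1, x2).1)
        + (sg * Real.sqrt (Ef (x1, x2)) / Df (x1, x2)) • JL ((x1, x2).2 - (x1, x2).1) = x3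
    simp only
    rw [hsgE, hAb, hDb, ← hu0def, add_assoc, hv0eq, hv0def]
    abel
  · -- distances
    intro y hy
    have hD := hDU y hy
    have hE := hEU y hy
    have hsqE : Real.sqrt (Ef y) ^ 2 = Ef y := Real.sq_sqrt hE.le
    have hβ2 : (sg * Real.sqrt (Ef y) / Df y) ^ 2 = Ef y / Df y ^ 2 := by
      rw [div_pow, mul_pow, hsg2, one_mul, hsqE]
    have hDfu : Df y = ⟪y.2 - y.1, y.2 - y.1⟫ := rfl
    have hval1 : (Af y / Df y) ^ 2 * Df y
        + (sg * Real.sqrt (Ef y) / Df y) ^ 2 * Df y = r1 ^ 2 :=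
      scalar1 hD.ne' rfl hβ2 rfl
    have hval2 : (Af y / Df y - 1) ^ 2 * Df y
        + (sg * Real.sqrt (Ef y) / Df y) ^ 2 * Df y = r2 ^ 2 :=
      scalar2 hD.ne' rfl hβ2 rfl rfl
    have hw1 : ξ y - y.1 = (Af y / Df y) • (y.2 - y.1)
        + (sg * Real.sqrt (Ef y) / Df y) • JL (y.2 - y.1) := by
      show (y.1 + (Af y / Df y) • (y.2 - y.1)
        + (sg * Real.sqrt (Ef y) / Df y) • JL (y.2 - y.1)) - y.1 = _
      abel
    have hw2 : ξ y - y.2 = (Af y / Df y - 1) • (y.2 - y.1)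
        + (sg * Real.sqrt (Ef y) / Df y) • JL (y.2 - y.1) := by
      show (y.1 + (Af y / Df y) • (y.2 - y.1)
        + (sg * Real.sqrt (Ef y) / Df y) • JL (y.2 - y.1)) - y.2 = _
      rw [sub_smul, one_smul]
      abel
    constructor
    · rw [dist_eq_norm]
      refine eq_of_sq_eq_sq (norm_nonneg _) dist_nonneg ?_
      rw [← real_inner_self_eq_norm_sq, hw1, real_inner_add_add_self]
      simp only [real_inner_smul_left, real_inner_smul_right, key3, key4, mul_zero, zero_mul]
      rw [← hDfu]
      linear_combination hval1
    · rw [dist_eq_norm]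
      refine eq_of_sq_eq_sq (norm_nonneg _) dist_nonneg ?_
      rw [← real_inner_self_eq_norm_sq, hw2, real_inner_add_add_self]
      simp only [real_inner_smul_left, real_inner_smul_right, key3, key4, mul_zero, zero_mul]
      rw [← hDfu]
      linear_combination hval2
  · -- uniqueness
    rintro ξ' ⟨hs', hb', hd'⟩
    have hpoint : ∀ y ∈ U, ∀ z : Pt, dist z y.1 = r1 → dist z y.2 = r2 →
        ⟪z - y.1, y.2 - y.1⟫ = Af y ∧ ⟪z - y.1, JL (y.2 - y.1)⟫ ^ 2 = Ef y := by
      intro y hy z h1 h2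
      have hz1 : ⟪z - y.1, z - y.1⟫ = r1 ^ 2 := by
        rw [real_inner_self_eq_norm_sq, ← dist_eq_norm, h1]
      have hz2 : ⟪z - y.2, z - y.2⟫ = r2 ^ 2 := by
        rw [real_inner_self_eq_norm_sq, ← dist_eq_norm, h2]
      have hzz : z - y.2 = (z - y.1) - (y.2 - y.1) := by abel
      rw [hzz, real_inner_sub_sub_self] at hz2
      have hDfu : ⟪y.2 - y.1, y.2 - y.1⟫ = Df y := rfl
      have hAfy : Af y = (Df y + r1 ^ 2 - r2 ^ 2) / 2 := rfl
      rw [hDfu] at hz2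
      have e1 : ⟪z - y.1, y.2 - y.1⟫ = Af y := by rw [hAfy]; linarith
      refine ⟨e1, ?_⟩
      have hk := key2 (y.2 - y.1) (z - y.1)
      rw [e1, hz1, hDfu] at hk
      have hEfy : Ef y = r1 ^ 2 * Df y - Af y ^ 2 := rfl
      rw [hEfy]; linarith
    set g : Pt × Pt → ℝ :=
      fun y => ⟪ξ' y - y.1, JL (y.2 - y.1)⟫ * (sg * Real.sqrt (Ef y)) with hgdef
    have hgc : ContinuousOn g U := by
      apply ContinuousOn.mul
      · exact ContinuousOn.inner (hs'.continuousOn.sub continuousOn_fst)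
          ((JL.continuous.comp (continuous_snd.sub continuous_fst)).continuousOn)
      · exact (continuous_const.mul (hEsm.continuous.sqrt)).continuousOn
    have hgb : g (x1, x2) = c0 * c0 := by
      show ⟪ξ' (x1, x2) - x1, JL (x2 - x1)⟫ * (sg * Real.sqrt (Ef (x1, x2))) = c0 * c0
      rw [hb', hsgE, ← hu0def, ← hv0def, ← hc0def]
    have hSp : IsOpen (U ∩ g ⁻¹' Set.Ioi 0) :=
      hgc.isOpen_inter_preimage Metric.isOpen_ball isOpen_Ioi
    have hSn : IsOpen (U ∩ g ⁻¹' Set.Iio 0) :=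
      hgc.isOpen_inter_preimage Metric.isOpen_ball isOpen_Iio
    have hcover : U ⊆ (U ∩ g ⁻¹' Set.Ioi 0) ∪ (U ∩ g ⁻¹' Set.Iio 0) := by
      intro y hy
      have hp := hpoint y hy (ξ' y) (hd' y hy).1 (hd' y hy).2
      have h2 : ⟪ξ' y - y.1, JL (y.2 - y.1)⟫ ≠ 0 := by
        intro hzero
        rw [hzero] at hp
        have := hp.2
        have hEy := hEU y hy
        nlinarith
      have h3 : sg * Real.sqrt (Ef y) ≠ 0 := by
        have hpos := Real.sqrt_pos.mpr (hEU y hy)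
        rw [hsgdef]
        split <;> simp [hpos.ne']
      have hgz : g y ≠ 0 := mul_ne_zero h2 h3
      rcases hgz.lt_or_gt with hlt | hgt
      · exact Or.inr ⟨hy, hlt⟩
      · exact Or.inl ⟨hy, hgt⟩
    have hdisj : Disjoint (U ∩ g ⁻¹' Set.Ioi 0) (U ∩ g ⁻¹' Set.Iio 0) := by
      rw [Set.disjoint_left]
      rintro y ⟨-, h1⟩ ⟨-, h2⟩
      have h1' : (0:ℝ) < g y := h1
      have h2' : g y < 0 := h2
      linarith
    have hpre : IsPreconnected U := (convex_ball _ _).isPreconnected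
    have hUP : U ⊆ U ∩ g ⁻¹' Set.Ioi 0 := by
      refine hpre.subset_left_of_subset_union hSp hSn hdisj hcover
        ⟨(x1, x2), Metric.mem_ball_self hε, Metric.mem_ball_self hε, ?_⟩
      show (0:ℝ) < g (x1, x2)
      rw [hgb]
      exact mul_self_pos.mpr hc0
    intro y hy
    have hD := hDU y hy
    have hE := hEU y hy
    have hgpos : (0:ℝ) < g y := (hUP hy).2
    have hp := hpoint y hy (ξ' y) (hd' y hy).1 (hd' y hy).2
    have hDfu : ⟪y.2 - y.1, y.2 - y.1⟫ = Df y := rfl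
    have hw1 : ξ y - y.1 = (Af y / Df y) • (y.2 - y.1)
        + (sg * Real.sqrt (Ef y) / Df y) • JL (y.2 - y.1) := by
      show (y.1 + (Af y / Df y) • (y.2 - y.1)
        + (sg * Real.sqrt (Ef y) / Df y) • JL (y.2 - y.1)) - y.1 = _
      abel
    have hξ1 : ⟪ξ y - y.1, y.2 - y.1⟫ = Af y := by
      rw [hw1, inner_add_left, real_inner_smul_left, real_inner_smul_left, hDfu, key3',
        mul_zero, add_zero, div_mul_cancel₀ _ hD.ne']
    have hξ2 : ⟪ξ y - y.1, JL (y.2 - y.1)⟫ = sg * Real.sqrt (Ef y) := by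
      rw [hw1, inner_add_left, real_inner_smul_left, real_inner_smul_left, key3, key4, hDfu,
        mul_zero, zero_add, div_mul_cancel₀ _ hD.ne']
    have hgy : (0:ℝ) < ⟪ξ' y - y.1, JL (y.2 - y.1)⟫ * (sg * Real.sqrt (Ef y)) := hgpos
    have hb2 : (sg * Real.sqrt (Ef y)) ^ 2 = Ef y := by
      rw [mul_pow, hsg2, one_mul, Real.sq_sqrt hE.le]
    have hc'eq : ⟪ξ' y - y.1, JL (y.2 - y.1)⟫ = sg * Real.sqrt (Ef y) := by
      have hfac : (⟪ξ' y - y.1, JL (y.2 - y.1)⟫ - sg * Real.sqrt (Ef y))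
          * (⟪ξ' y - y.1, JL (y.2 - y.1)⟫ + sg * Real.sqrt (Ef y)) = 0 := by
        linear_combination hp.2 - hb2
      rcases mul_eq_zero.mp hfac with h0 | h0
      · exact sub_eq_zero.mp h0
      · exfalso
        have hneg : ⟪ξ' y - y.1, JL (y.2 - y.1)⟫ = -(sg * Real.sqrt (Ef y)) :=
          eq_neg_of_add_eq_zero_left h0
        rw [hneg] at hgy
        have hr : -(sg * Real.sqrt (Ef y)) * (sg * Real.sqrt (Ef y)) = -Ef y := by
          linear_combination -hb2
        rw [hr] at hgy
        linarith
    have h1 := key1 (y.2 - y.1) (ξ y - y.1)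
    have h2 := key1 (y.2 - y.1) (ξ' y - y.1)
    rw [hξ1, hξ2] at h1
    rw [hp.1, hc'eq] at h2
    have hsmul : ⟪y.2 - y.1, y.2 - y.1⟫ • (ξ y - y.1)
        = ⟪y.2 - y.1, y.2 - y.1⟫ • (ξ' y - y.1) := by rw [← h1, ← h2]
    have hne : ⟪y.2 - y.1, y.2 - y.1⟫ ≠ (0:ℝ) := by rw [hDfu]; exact hD.ne'
    have h3 := smul_right_injective Pt hne hsmul
    exact sub_left_inj.mp h3
end

section
/- Let (G,p) be a line framework with G a triangulated Laman graph and p ∈ P_G. Then the preimage of ρ_G(p) under the distance map equals the SE(2)-orbit of p: ρ_G^{-1}(ρ_G(p)) = O_p. Equivalently, any configuration p' ∈ P_G with ‖x'_i − x'_j‖ = ‖x_i − x_j‖ for all (i,j) ∈ E is congruent to p under a rotation and translation of the plane. -/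
open scoped BigOperators

noncomputable section AuxStmt11

private lemma dist_sq_stmt11 (x y : Pt) : dist x y ^ 2 = (x 0 - y 0)^2 + (x 1 - y 1)^2 := by
  rw [EuclideanSpace.dist_eq, Real.sq_sqrt (by positivity)]
  simp [Fin.sum_univ_two, Real.dist_eq, sq_abs]

private lemma degenerate_triangle_stmt11 {a b c a' b' c' : Pt} {t : ℝ}
    (hc : c = a + t • (b - a))
    (h1 : dist a' b' = dist a b) (h2 : dist a' c' = dist a c)
    (h3 : dist b' c' = dist b c) :
    c' = a' + t • (b' - a') := by
  set X := c' - a' with hX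
  set Y := b' - a' with hY
  have hnb : ‖Y‖ ^ 2 = ‖b - a‖ ^ 2 := by
    rw [hY, ← dist_eq_norm, ← dist_eq_norm, dist_comm b' a', dist_comm b a, h1]
  have hca : c - a = t • (b - a) := by rw [hc]; abel
  have hcb : c - b = (t - 1) • (b - a) := by rw [hc]; module
  have hX2 : ‖X‖ ^ 2 = t ^ 2 * ‖b - a‖ ^ 2 := by
    rw [hX, ← dist_eq_norm, dist_comm c' a', h2, dist_eq_norm, norm_sub_rev, hca, norm_smul]
    simp [mul_pow, sq_abs]
  have hXY2 : ‖X - Y‖ ^ 2 = (t - 1) ^ 2 * ‖b - a‖ ^ 2 := by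
    have : X - Y = c' - b' := by rw [hX, hY]; abel
    rw [this, ← dist_eq_norm, dist_comm c' b', h3, dist_eq_norm, norm_sub_rev, hcb, norm_smul]
    simp [mul_pow, sq_abs]
  have exp1 : ‖X - Y‖ ^ 2 = ‖X‖ ^ 2 - 2 * inner ℝ X Y + ‖Y‖ ^ 2 := norm_sub_sq_real X Y
  have exp2 : ‖X - t • Y‖ ^ 2 = ‖X‖ ^ 2 - 2 * (t * inner ℝ X Y) + t ^ 2 * ‖Y‖ ^ 2 := by
    rw [norm_sub_sq_real, real_inner_smul_right, norm_smul]
    simp [mul_pow, sq_abs]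
  have hz : ‖X - t • Y‖ ^ 2 = 0 := by nlinarith [hnb, hX2, hXY2, exp1, exp2]
  have : X - t • Y = 0 := by
    have := pow_eq_zero_iff (n := 2) (by norm_num) |>.mp hz
    exact norm_eq_zero.mp this
  have : c' - a' - t • (b' - a') = 0 := this
  have := sub_eq_zero.mp this
  linear_combination (norm := module) this

private lemma collinear_param_stmt11 {s : Set Pt} (h : Collinear ℝ s) {a b c : Pt}
    (ha : a ∈ s) (hb : b ∈ s) (hc : c ∈ s) (hab : a ≠ b) :
    ∃ t : ℝ, c = a + t • (b - a) := by
  obtain ⟨v, hv⟩ := (collinear_iff_of_mem ha).mp h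
  obtain ⟨rb, hrb⟩ := hv b hb
  obtain ⟨rc, hrc⟩ := hv c hc
  have hrb0 : rb ≠ 0 := by
    rintro rfl
    simp at hrb
    exact hab hrb.symm
  refine ⟨rc / rb, ?_⟩
  have hba : b - a = rb • v := by rw [hrb, vadd_eq_add]; abel
  rw [hrc, vadd_eq_add, hba, smul_smul, div_mul_cancel₀ _ hrb0]
  abel

private lemma se2_dist_stmt11 {θ : Matrix (Fin 2) (Fin 2) ℝ} (hθ : IsRotation θ) (v : Pt)
    {ι : Type*} (p : Conf ι) (i j : ι) :
    dist (pt (se2Act θ v p) i) (pt (se2Act θ v p) j) = dist (pt p i) (pt p j) := by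
  have h' : θ.transpose * θ = 1 := mul_eq_one_comm.mp hθ.1
  have e00 := congrFun (congrFun h' 0) 0
  have e01 := congrFun (congrFun h' 0) 1
  have e11 := congrFun (congrFun h' 1) 1
  simp [Matrix.mul_apply, Fin.sum_univ_two, Matrix.transpose_apply, Matrix.one_apply] at e00 e01 e11
  have hsq : dist (pt (se2Act θ v p) i) (pt (se2Act θ v p) j) ^ 2
      = dist (pt p i) (pt p j) ^ 2 := by
    rw [dist_sq_stmt11, dist_sq_stmt11]
    have hap : ∀ (k : ι) (c : Fin 2), pt (se2Act θ v p) k c = θ.mulVec (pt p k) c + v c :=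
      fun k c => rfl
    simp only [hap]
    simp only [Matrix.mulVec, dotProduct, Fin.sum_univ_two]
    linear_combination (pt p i 0 - pt p j 0)^2 * e00 + (pt p i 1 - pt p j 1)^2 * e11 +
      2 * (pt p i 0 - pt p j 0) * (pt p i 1 - pt p j 1) * e01
  have h1 : dist (pt (se2Act θ v p) i) (pt (se2Act θ v p) j)
      = Real.sqrt (dist (pt p i) (pt p j) ^ 2) := by
    rw [← hsq, Real.sqrt_sq dist_nonneg]
  rw [h1, Real.sqrt_sq dist_nonneg]

private lemma uniq_stmt11 {ι : Type*} {G : SimpleGraph ι} (H : Henneberg G)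
    (p q q' : Conf ι) (hp : p ∈ configSpace G) (hline : Collinear ℝ (Set.range (pt p)))
    (hq : ∀ i j, G.Adj i j → dist (pt q i) (pt q j) = dist (pt p i) (pt p j))
    (hq' : ∀ i j, G.Adj i j → dist (pt q' i) (pt q' j) = dist (pt p i) (pt p j))
    (hbase : ∀ l : Fin (Nat.card ι), (l : ℕ) < 2 → pt q (H.ord l) = pt q' (H.ord l)) :
    q = q' := by
  have key : ∀ m : ℕ, ∀ l : Fin (Nat.card ι), (l : ℕ) = m →
      pt q (H.ord l) = pt q' (H.ord l) := by
    intro m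
    induction m using Nat.strong_induction_on with
    | _ m IH =>
      intro l hl
      by_cases h2 : (l : ℕ) < 2
      · exact hbase l h2
      · push_neg at h2
        have hab : G.Adj (H.ord (H.par1 l)) (H.ord (H.par2 l)) := H.par_adj l h2
        have hak : G.Adj (H.ord (H.par1 l)) (H.ord l) :=
          (H.edge_iff _ _).mpr (Or.inr ⟨l, h2, Or.inl rfl⟩)
        have hbk : G.Adj (H.ord (H.par2 l)) (H.ord l) :=
          (H.edge_iff _ _).mpr (Or.inr ⟨l, h2, Or.inr rfl⟩)
        have hne : pt p (H.ord (H.par1 l)) ≠ pt p (H.ord (H.par2 l)) := hp _ _ hab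
        obtain ⟨t, ht⟩ := collinear_param_stmt11 hline ⟨_, rfl⟩ ⟨_, rfl⟩
          (⟨H.ord l, rfl⟩ : pt p (H.ord l) ∈ Set.range (pt p)) hne
        have IHa : pt q (H.ord (H.par1 l)) = pt q' (H.ord (H.par1 l)) :=
          IH _ (by have := H.par1_lt l h2; omega) _ rfl
        have IHb : pt q (H.ord (H.par2 l)) = pt q' (H.ord (H.par2 l)) :=
          IH _ (by have := H.par2_lt l h2; omega) _ rfl
        have e1 := degenerate_triangle_stmt11 ht (hq _ _ hab) (hq _ _ hak) (hq _ _ hbk)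
        have e2 := degenerate_triangle_stmt11 ht (hq' _ _ hab) (hq' _ _ hak) (hq' _ _ hbk)
        rw [e1, e2, IHa, IHb]
  apply PiLp.ext; intro ic
  obtain ⟨l, hl⟩ := H.ord.surjective ic.1
  have := congrArg (fun x : Pt => x ic.2) (key _ l rfl)
  simp only [pt, PiLp.toLp_apply] at this
  rw [hl] at this
  exact this

end AuxStmt11

/-- Lemma 3.7 of the paper. If `(G, p)` is a line framework with `G` a
triangulated Laman graph, then the configurations in `P_G` realizing the same edge lengths
as `p` are exactly the configurations in the SE(2)-orbit of `p`:
`ρ_G⁻¹(ρ_G(p)) = O_p`. -/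
theorem stmt11 {ι : Type*} [Fintype ι] (G : SimpleGraph ι)
    (hG : IsTriangulatedLaman G) (p : Conf ι) (hp : p ∈ configSpace G)
    (hline : Collinear ℝ (Set.range (pt p))) :
    {q | q ∈ configSpace G ∧
      ∀ i j : ι, G.Adj i j → dist (pt q i) (pt q j) = dist (pt p i) (pt p j)}
      = se2Orbit p := by
  ext q
  simp only [Set.mem_setOf_eq]
  constructor
  · rintro ⟨hqc, hqd⟩
    rcases hG with hcard | hH
    · -- at most one vertex
      have hsub : Subsingleton ι := by
        rw [Nat.card_eq_fintype_card] at hcard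
        exact Fintype.card_le_one_iff_subsingleton.mp hcard
      rcases isEmpty_or_nonempty ι with hι | hι
      · exact ⟨1, 0, ⟨by simp, by simp⟩, PiLp.ext fun ic => (IsEmpty.false ic.1).elim⟩
      · obtain ⟨i0⟩ := hι
        refine ⟨1, (WithLp.toLp 2 (fun c => q (i0, c) - p (i0, c)) : Pt), ⟨by simp, by simp⟩, ?_⟩
        apply PiLp.ext; intro ic
        have h1 : ic.1 = i0 := Subsingleton.elim _ _
        show q ic = (1 : Matrix (Fin 2) (Fin 2) ℝ).mulVec (pt p ic.1) ic.2 + _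
        rw [Matrix.one_mulVec]
        simp only [pt, h1]
        have : q ic = q (i0, ic.2) := by rw [← h1]
        rw [this]; ring
    · -- Henneberg case
      obtain ⟨H⟩ := hH
      have hn := H.two_le
      set l0 : Fin (Nat.card ι) := ⟨0, by omega⟩ with hl0
      set l1 : Fin (Nat.card ι) := ⟨1, by omega⟩ with hl1
      have hadj01 : G.Adj (H.ord l0) (H.ord l1) := (H.edge_iff _ _).mpr (Or.inl rfl)
      set x0 := pt p (H.ord l0) with hx0
      set x1 := pt p (H.ord l1) with hx1
      set y0 := pt q (H.ord l0) with hy0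
      set y1 := pt q (H.ord l1) with hy1
      have hx01 : x0 ≠ x1 := hp _ _ hadj01
      set d := dist x0 x1 with hd
      have hd0 : d ≠ 0 := dist_ne_zero.mpr hx01
      have hdq : dist y0 y1 = d := hqd _ _ hadj01
      have hx : (x1 0 - x0 0) ^ 2 + (x1 1 - x0 1) ^ 2 = d ^ 2 := by
        rw [hd, dist_sq_stmt11]; ring
      have hy : (y1 0 - y0 0) ^ 2 + (y1 1 - y0 1) ^ 2 = d ^ 2 := by
        rw [← hdq, dist_sq_stmt11]; ring
      set A : ℝ := ((y1 0 - y0 0) * (x1 0 - x0 0) + (y1 1 - y0 1) * (x1 1 - x0 1)) / d ^ 2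
        with hA
      set B : ℝ := ((y1 0 - y0 0) * (x1 1 - x0 1) - (y1 1 - y0 1) * (x1 0 - x0 0)) / d ^ 2
        with hB
      set θ : Matrix (Fin 2) (Fin 2) ℝ := !![A, B; -B, A] with hθ
      have hAB : A ^ 2 + B ^ 2 = 1 := by
        rw [hA, hB]
        field_simp
        linear_combination ((x1 0 - x0 0) ^ 2 + (x1 1 - x0 1) ^ 2) * hy + d ^ 2 * hx
      have hrot : IsRotation θ := by
        have htr : θ.transpose = !![A, -B; B, A] := by
          ext i j
          fin_cases i <;> fin_cases j <;> simp [hθ, Matrix.transpose_apply]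
        constructor
        · rw [htr, hθ, Matrix.mul_fin_two, Matrix.one_fin_two]
          ext i j
          fin_cases i <;> fin_cases j <;> simp <;>
            first
              | linear_combination hAB
              | ring
        · rw [hθ, Matrix.det_fin_two_of]
          linear_combination hAB
      set v : Pt := WithLp.toLp 2 (fun c => y0 c - θ.mulVec x0 c : Fin 2 → ℝ) with hv
      have hmul : ∀ (z : Pt) (c : Fin 2),
          θ.mulVec z c = θ c 0 * z 0 + θ c 1 * z 1 := by
        intro z c
        simp [Matrix.mulVec, dotProduct, Fin.sum_univ_two]
      have hb0 : pt (se2Act θ v p) (H.ord l0) = y0 := by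
        apply PiLp.ext; intro c
        show θ.mulVec x0 c + v c = y0 c
        rw [hv]; ring
      have hApB0 : A * (x1 0 - x0 0) + B * (x1 1 - x0 1) = y1 0 - y0 0 := by
        rw [hA, hB]
        field_simp
        linear_combination (y1 0 - y0 0) * hx
      have hApB1 : -B * (x1 0 - x0 0) + A * (x1 1 - x0 1) = y1 1 - y0 1 := by
        rw [hA, hB]
        field_simp
        linear_combination (y1 1 - y0 1) * hx
      have hb1 : pt (se2Act θ v p) (H.ord l1) = y1 := by
        apply PiLp.ext; intro c
        show θ.mulVec x1 c + v c = y1 c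
        rw [hv]
        simp only
        rw [hmul, hmul]
        fin_cases c <;> simp [hθ]
        · linear_combination hApB0
        · linear_combination hApB1
      have hq' : ∀ i j, G.Adj i j →
          dist (pt (se2Act θ v p) i) (pt (se2Act θ v p) j) = dist (pt p i) (pt p j) :=
        fun i j h => se2_dist_stmt11 hrot v p i j
      have hbase : ∀ l : Fin (Nat.card ι), (l : ℕ) < 2 →
          pt q (H.ord l) = pt (se2Act θ v p) (H.ord l) := by
        intro l hlt
        have hcase : (l : ℕ) = 0 ∨ (l : ℕ) = 1 := by omega
        rcases hcase with h | h
        · have : l = l0 := Fin.ext h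
          rw [this, hb0]
        · have : l = l1 := Fin.ext h
          rw [this, hb1]
      have := uniq_stmt11 H p q (se2Act θ v p) hp hline hqd hq' hbase
      exact ⟨θ, v, hrot, this⟩
  · rintro ⟨θ, v, hrot, rfl⟩
    constructor
    · intro i j hadj
      have hne : pt p i ≠ pt p j := hp i j hadj
      have := se2_dist_stmt11 hrot v p i j
      intro heq
      apply hne
      rw [← dist_eq_zero, ← this, dist_eq_zero]
      exact heq
    · intro i j hadj
      exact se2_dist_stmt11 hrot v p i j
end

section
/- Let G be a triangulated Laman graph on n = k vertices with continuously differentiable control laws f_{ij}(·) := u_{ij}(·, d̄_{ij}), and let (G,p) be a framework in which vertex k has degree 2 and is adjacent to vertices i and j, the points x_i, x_j, x_k are collinear, and f_{ik}(d_{ik})(x_i − x_k) + f_{jk}(d_{jk})(x_j − x_k) = 0. Let g_{ij} ∈ C¹(ℝ_{>0},ℝ) satisfy g_{ij}(d_{ij})(x_j − x_i) = f_{ik}(d_{ik})(x_k − x_i), let G* be the subgraph of G induced by V \ {k} with p* the induced sub-configuration, and let ℛ be the formation control system induced by G* whose control law on edge (i,j) is f_{ij} + g_{ij} and whose control laws on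 all other edges of G* are unchanged. Then p* is an equilibrium of ℛ if and only if p is an equilibrium of the original system induced by G. -/
open scoped BigOperators

open Classical in
/-- Lemma 4.2 of the paper: system reduction. Let `G` be a triangulated
Laman graph, let a vertex `vk` of degree `2` be adjacent exactly to `vi` and `vj` (which
are adjacent), let `x_{vi}, x_{vj}, x_{vk}` be collinear with the dynamics of `x_{vk}`
vanishing at `p`, and let `g` be a `C¹` function with
`g(d_{ij})(x_j - x_i) = f_{ik}(d_{ik})(x_k - x_i)`. Then the configuration obtained by
removing `vk` is an equilibrium of the reduced system `ℛ` (induced by the subgraph on the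
remaining vertices, with the control law on `(vi, vj)` replaced by `f_{ij} + g`) if and
only if `p` is an equilibrium of the original system. -/
theorem stmt14 {ι : Type*} [Fintype ι] [DecidableEq ι] (G : SimpleGraph ι)
    (hG : IsTriangulatedLaman G)
    (f : ι → ι → ℝ → ℝ) (hf : ∀ i j, ContDiffOn ℝ 1 (f i j) (Set.Ioi 0))
    (hfsymm : ∀ i j, f i j = f j i)
    (vi vj vk : ι) (hadjij : G.Adj vi vj) (hadjik : G.Adj vi vk) (hadjjk : G.Adj vj vk)
    (hdeg : G.neighborSet vk = {vi, vj})
    (p : Conf ι) (hp : p ∈ configSpace G)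
    (hcol : Collinear ℝ {pt p vi, pt p vj, pt p vk})
    (hstat : f vi vk (dist (pt p vi) (pt p vk)) • (pt p vi - pt p vk)
        + f vj vk (dist (pt p vj) (pt p vk)) • (pt p vj - pt p vk) = 0)
    (g : ℝ → ℝ) (hg : ContDiffOn ℝ 1 g (Set.Ioi 0))
    (hgval : g (dist (pt p vi) (pt p vj)) • (pt p vj - pt p vi)
        = f vi vk (dist (pt p vi) (pt p vk)) • (pt p vk - pt p vi)) :
    (formationField (SimpleGraph.fromEdgeSet (G.edgeSet \ {e : Sym2 ι | vk ∈ e}))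
        (fun a b s => if s(a, b) = s(vi, vj) then f a b s + g s else f a b s) p = 0)
      ↔ formationField G f p = 0 := by
  classical
  have hne : vi ≠ vj := hadjij.ne
  have hik : vi ≠ vk := hadjik.ne
  have hjk : vj ≠ vk := hadjjk.ne
  have hnb : ∀ b, G.Adj vk b ↔ b = vi ∨ b = vj := by
    intro b
    rw [← SimpleGraph.mem_neighborSet, hdeg]
    simp
  have hstat' : ∀ c : Fin 2,
      f vi vk (dist (pt p vi) (pt p vk)) * (p (vi, c) - p (vk, c))
        + f vj vk (dist (pt p vj) (pt p vk)) * (p (vj, c) - p (vk, c)) = 0 := by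
    intro c
    have := congrArg (fun v => v c) hstat
    simpa [pt] using this
  have hgval' : ∀ c : Fin 2,
      g (dist (pt p vi) (pt p vj)) * (p (vj, c) - p (vi, c))
        = f vi vk (dist (pt p vi) (pt p vk)) * (p (vk, c) - p (vi, c)) := by
    intro c
    have := congrArg (fun v => v c) hgval
    simpa [pt] using this
  have hgval2 : ∀ c : Fin 2,
      g (dist (pt p vi) (pt p vj)) * (p (vi, c) - p (vj, c))
        = f vj vk (dist (pt p vj) (pt p vk)) * (p (vk, c) - p (vj, c)) := by
    intro c
    linear_combination - hgval' c + hstat' c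
  have hadj' : ∀ a b : ι,
      (SimpleGraph.fromEdgeSet (G.edgeSet \ {e : Sym2 ι | vk ∈ e})).Adj a b
        ↔ G.Adj a b ∧ a ≠ vk ∧ b ≠ vk := by
    intro a b
    simp only [SimpleGraph.fromEdgeSet_adj, Set.mem_diff, SimpleGraph.mem_edgeSet,
      Set.mem_setOf_eq, Sym2.mem_iff]
    constructor
    · rintro ⟨⟨h1, h2⟩, -⟩
      exact ⟨h1, fun h => h2 (Or.inl h.symm), fun h => h2 (Or.inr h.symm)⟩
    · rintro ⟨h1, h2, h3⟩
      exact ⟨⟨h1, by rintro (h | h) <;> simp_all⟩, h1.ne⟩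
  suffices h : formationField (SimpleGraph.fromEdgeSet (G.edgeSet \ {e : Sym2 ι | vk ∈ e}))
      (fun a b s => if s(a, b) = s(vi, vj) then f a b s + g s else f a b s) p
      = formationField G f p by rw [h]
  refine PiLp.ext fun ic => ?_
  obtain ⟨a, c⟩ := ic
  simp only [formationField, PiLp.toLp_apply]
  by_cases hak : a = vk
  · rw [hak]
    have hL : ∀ b : ι, b ∈ Finset.univ →
        (if (SimpleGraph.fromEdgeSet (G.edgeSet \ {e : Sym2 ι | vk ∈ e})).Adj vk b
          then (if s(vk, b) = s(vi, vj)
              then f vk b (dist (pt p vk) (pt p b)) + g (dist (pt p vk) (pt p b))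
              else f vk b (dist (pt p vk) (pt p b))) * (p (b, c) - p (vk, c))
          else 0) = 0 := by
      intro b _
      rw [if_neg]
      simp only [hadj']
      rintro ⟨-, h, -⟩
      exact h rfl
    rw [Finset.sum_eq_zero hL]
    symm
    have hz : ∀ b ∈ Finset.univ, b ∉ ({vi, vj} : Finset ι) →
        (if G.Adj vk b then f vk b (dist (pt p vk) (pt p b)) * (p (b, c) - p (vk, c)) else 0)
          = 0 := by
      intro b _ hb
      simp only [Finset.mem_insert, Finset.mem_singleton, not_or] at hb
      rw [if_neg]
      intro hadj
      rcases (hnb b).1 hadj with h | h <;> simp_all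
    rw [← Finset.sum_subset (Finset.subset_univ ({vi, vj} : Finset ι)) hz,
      Finset.sum_pair hne,
      if_pos ((hnb vi).2 (Or.inl rfl)), if_pos ((hnb vj).2 (Or.inr rfl)),
      hfsymm vk vi, hfsymm vk vj, dist_comm (pt p vk) (pt p vi), dist_comm (pt p vk) (pt p vj)]
    linear_combination hstat' c
  · -- a ≠ vk
    rw [← sub_eq_zero, ← Finset.sum_sub_distrib]
    by_cases hai : a = vi
    · rw [hai]
      have hz : ∀ b ∈ Finset.univ, b ∉ ({vj, vk} : Finset ι) →
          ((if (SimpleGraph.fromEdgeSet (G.edgeSet \ {e : Sym2 ι | vk ∈ e})).Adj vi b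
            then (if s(vi, b) = s(vi, vj)
                then f vi b (dist (pt p vi) (pt p b)) + g (dist (pt p vi) (pt p b))
                else f vi b (dist (pt p vi) (pt p b))) * (p (b, c) - p (vi, c)) else 0)
          - (if G.Adj vi b then f vi b (dist (pt p vi) (pt p b)) * (p (b, c) - p (vi, c)) else 0))
            = 0 := by
        intro b _ hb
        simp only [Finset.mem_insert, Finset.mem_singleton, not_or] at hb
        obtain ⟨hbj, hbk⟩ := hb
        simp only [hadj']
        have hs : s(vi, b) ≠ s(vi, vj) := by
          intro h
          rw [Sym2.eq_iff] at h
          rcases h with ⟨-, h⟩ | ⟨h, -⟩ <;> simp_all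
        rw [if_neg hs]
        by_cases hadj : G.Adj vi b
        · rw [if_pos ⟨hadj, hik, hbk⟩, if_pos hadj, sub_self]
        · rw [if_neg (by rintro ⟨h, -⟩; exact hadj h), if_neg hadj, sub_self]
      rw [← Finset.sum_subset (Finset.subset_univ ({vj, vk} : Finset ι)) hz,
        Finset.sum_pair hjk]
      have h1 : (SimpleGraph.fromEdgeSet (G.edgeSet \ {e : Sym2 ι | vk ∈ e})).Adj vi vj :=
        (hadj' vi vj).2 ⟨hadjij, hik, hjk⟩
      have h2 : ¬ (SimpleGraph.fromEdgeSet (G.edgeSet \ {e : Sym2 ι | vk ∈ e})).Adj vi vk := by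
        simp only [hadj']
        rintro ⟨-, -, h⟩
        exact h rfl
      rw [if_pos h1, if_pos rfl, if_pos hadjij, if_neg h2, if_pos hadjik]
      linear_combination hgval' c
    · by_cases haj : a = vj
      · rw [haj]
        have hz : ∀ b ∈ Finset.univ, b ∉ ({vi, vk} : Finset ι) →
            ((if (SimpleGraph.fromEdgeSet (G.edgeSet \ {e : Sym2 ι | vk ∈ e})).Adj vj b
              then (if s(vj, b) = s(vi, vj)
                  then f vj b (dist (pt p vj) (pt p b)) + g (dist (pt p vj) (pt p b))
                  else f vj b (dist (pt p vj) (pt p b))) * (p (b, c) - p (vj, c)) else 0)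
            - (if G.Adj vj b then f vj b (dist (pt p vj) (pt p b)) * (p (b, c) - p (vj, c)) else 0))
              = 0 := by
          intro b _ hb
          simp only [Finset.mem_insert, Finset.mem_singleton, not_or] at hb
          obtain ⟨hbi, hbk⟩ := hb
          simp only [hadj']
          have hs : s(vj, b) ≠ s(vi, vj) := by
            intro h
            rw [Sym2.eq_iff] at h
            rcases h with ⟨h, -⟩ | ⟨-, h⟩ <;> simp_all
          rw [if_neg hs]
          by_cases hadj : G.Adj vj b
          · rw [if_pos ⟨hadj, hjk, hbk⟩, if_pos hadj, sub_self]
          · rw [if_neg (by rintro ⟨h, -⟩; exact hadj h), if_neg hadj, sub_self]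
        rw [← Finset.sum_subset (Finset.subset_univ ({vi, vk} : Finset ι)) hz,
          Finset.sum_pair hik]
        have h1 : (SimpleGraph.fromEdgeSet (G.edgeSet \ {e : Sym2 ι | vk ∈ e})).Adj vj vi :=
          (hadj' vj vi).2 ⟨hadjij.symm, hjk, hik⟩
        have h2 : ¬ (SimpleGraph.fromEdgeSet (G.edgeSet \ {e : Sym2 ι | vk ∈ e})).Adj vj vk := by
          simp only [hadj']
          rintro ⟨-, -, h⟩
          exact h rfl
        have hs : s(vj, vi) = s(vi, vj) := Sym2.eq_swap
        rw [if_pos h1, if_pos hs, if_pos hadjij.symm, if_neg h2, if_pos hadjjk,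
          hfsymm vj vi, dist_comm (pt p vj) (pt p vi)]
        linear_combination hgval2 c
      · -- a ∉ {vi, vj, vk}: termwise equal
        apply Finset.sum_eq_zero
        intro b _
        simp only [hadj']
        have hs : s(a, b) ≠ s(vi, vj) := by
          intro h
          rw [Sym2.eq_iff] at h
          rcases h with ⟨h, -⟩ | ⟨h, -⟩ <;> simp_all
        rw [if_neg hs]
        by_cases hbk : b = vk
        · rw [hbk]
          rw [if_neg (by rintro ⟨-, -, h⟩; exact h rfl), if_neg, sub_self]
          intro hadj
          rcases (hnb a).1 hadj.symm with h | h <;> simp_all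
        · by_cases hadj : G.Adj a b
          · rw [if_pos ⟨hadj, hak, hbk⟩, if_pos hadj, sub_self]
          · rw [if_neg (by rintro ⟨h, -⟩; exact hadj h), if_neg hadj, sub_self]
end
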